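/- arXiv:2106.16242 — 2 statements merged into one kernel-verified Lean document; each statement's English description precedes it below -/
import Mathlib

section
/- Fix $n$, $0 < r < 1$ with $k = \lfloor rn \rfloor \geq 1$, and an integer $0 \leq \kappa \leq n - k$. Write $n - \kappa = p'k + q'$ with $0 \leq q' < k$. Then the maximum number of edges of a graph $G$ on $n$ vertices with $CO_v^r(G) = \kappa$ is $f(\kappa) = \kappa(n-\kappa) + \binom{\kappa}{2} + p'\binom{k}{2} + \binom{q'}{2}$, attained by the join of $K_\kappa$ with the disjoint union of $p'$ copies of $K_k$ and one copy of $K_{q'}$. -/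
open SimpleGraph

/-- A graph is in a *failure state* for threshold `k` if every connected
component has order at most `k`. -/
def failureState {V : Type*} (G : SimpleGraph V) (k : ℕ) : Prop :=
  ∀ v : V, (G.connectedComponentMk v).supp.ncard ≤ k

/-- `S` is a vertex disconnecting set: removing the vertices of `S` from `G`
leaves every component with at most `k` vertices. -/
def vertexDisconnects {V : Type*} (G : SimpleGraph V) (k : ℕ) (S : Set V) : Prop :=
  failureState (G.induce Sᶜ) k

/-- Component order proportion vertex connectivity: minimum size of a vertex
disconnecting set. -/
noncomputable def COv {V : Type*} (G : SimpleGraph V) (k : ℕ) : ℕ :=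
  sInf {c | ∃ S : Set V, S.ncard = c ∧ vertexDisconnects G k S}

/-- Component order proportion edge connectivity: minimum size of an edge
disconnecting set. -/
noncomputable def COe {V : Type*} (G : SimpleGraph V) (k : ℕ) : ℕ :=
  sInf {c | ∃ E' : Set (Sym2 V), E' ⊆ G.edgeSet ∧ E'.ncard = c ∧
    failureState (G.deleteEdges E') k}

/-- Minimum of `COv` over all graphs with `n` vertices and `m` edges. -/
noncomputable def gminV (n k m : ℕ) : ℕ :=
  sInf {c | ∃ G : SimpleGraph (Fin n), G.edgeSet.ncard = m ∧ COv G k = c}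

/-- Minimum of `COe` over all graphs with `n` vertices and `m` edges. -/
noncomputable def gminE (n k m : ℕ) : ℕ :=
  sInf {c | ∃ G : SimpleGraph (Fin n), G.edgeSet.ncard = m ∧ COe G k = c}

open Finset

lemma choose2_add (x y : ℕ) : (x + y).choose 2 = x.choose 2 + y.choose 2 + x * y := by
  induction y with
  | zero => simp
  | succ y ih =>
    have h1 : x + (y+1) = (x+y) + 1 := by ring
    have h2 : ∀ m : ℕ, (m+1).choose 2 = m + m.choose 2 := fun m => by
      rw [Nat.choose_succ_succ, Nat.choose_one_right]
    rw [h1, h2 (x+y), h2 y, ih]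
    ring

lemma two_mul_choose_two (t : ℕ) : 2 * t.choose 2 + t = t * t := by
  induction t with
  | zero => simp
  | succ t ih =>
    have h2 : (t+1).choose 2 = t + t.choose 2 := by
      rw [Nat.choose_succ_succ, Nat.choose_one_right]
    rw [h2]
    nlinarith [ih]

lemma packing_step (k a p₁ q₁ p q : ℕ) (hk : 1 ≤ k) (ha : a ≤ k) (hq₁ : q₁ < k) (hq : q < k)
    (h : a + (p₁ * k + q₁) = p * k + q) :
    a.choose 2 + (p₁ * k.choose 2 + q₁.choose 2) ≤ p * k.choose 2 + q.choose 2 := by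
  have h1 : p₁ ≤ p := by nlinarith
  have h2 : p ≤ p₁ + 1 := by nlinarith
  have hcase : p = p₁ ∨ p = p₁ + 1 := by omega
  rcases hcase with rfl | rfl
  · -- a + q₁ = q
    have hq' : a + q₁ = q := by
      have := h; nlinarith
    rw [← hq', choose2_add]
    omega
  · -- a + q₁ = k + q
    have hk' : a + q₁ = k + q := by nlinarith
    have haq : q ≤ a := by omega
    obtain ⟨d, rfl⟩ := Nat.exists_eq_add_of_le haq  -- a = q + d
    have hkd : k = q₁ + d := by omega
    have hqq : q ≤ q₁ := by omega
    rw [choose2_add, hkd, choose2_add]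
    nlinarith [Nat.mul_le_mul_right d hqq]

lemma packing {k : ℕ} (hk : 1 ≤ k) {ι : Type*} [DecidableEq ι] (I : Finset ι) (t : ι → ℕ)
    (ht : ∀ i ∈ I, t i ≤ k) (p q : ℕ) (hq : q < k) (hsum : ∑ i ∈ I, t i = p * k + q) :
    ∑ i ∈ I, (t i).choose 2 ≤ p * k.choose 2 + q.choose 2 := by
  induction I using Finset.induction generalizing p q with
  | empty =>
    simp only [Finset.sum_empty] at hsum ⊢
    have hp : p = 0 := by
      rcases Nat.eq_zero_or_pos p with h | h
      · exact h
      · nlinarith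
    have : q = 0 := by omega
    simp [hp, this]
  | @insert a I ha ih =>
    rw [Finset.sum_insert ha] at hsum ⊢
    set R := ∑ i ∈ I, t i with hR
    have hta : t a ≤ k := ht a (Finset.mem_insert_self a I)
    have hIH := ih (fun i hi => ht i (Finset.mem_insert_of_mem hi)) (R / k) (R % k)
      (Nat.mod_lt _ (by omega)) (Nat.div_add_mod' R k).symm
    have hstep := packing_step k (t a) (R / k) (R % k) p q hk hta
      (Nat.mod_lt _ (by omega)) hq (by rw [Nat.div_add_mod']; exact hsum)
    calc (t a).choose 2 + ∑ i ∈ I, (t i).choose 2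
        ≤ (t a).choose 2 + (R / k * k.choose 2 + (R % k).choose 2) := by omega
      _ ≤ p * k.choose 2 + q.choose 2 := hstep

def blockGraph {V : Type*} {ι : Type*} (S : Finset V) (f : V → ι) : SimpleGraph V where
  Adj v w := v ≠ w ∧ (v ∈ S ∨ w ∈ S ∨ f v = f w)
  symm := by
    constructor
    rintro v w ⟨h1, h2⟩
    refine ⟨h1.symm, ?_⟩
    rcases h2 with h | h | h
    exacts [Or.inr (Or.inl h), Or.inl h, Or.inr (Or.inr h.symm)]
  loopless := by constructor; rintro v ⟨h, -⟩; exact h rfl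

instance blockGraph.adjDecidable {V : Type*} [DecidableEq V] {ι : Type*} [DecidableEq ι]
    (S : Finset V) (f : V → ι) : DecidableRel (blockGraph S f).Adj :=
  fun _ _ => instDecidableAnd

lemma blockGraph_degree_mem {V : Type*} [Fintype V] [DecidableEq V] {ι : Type*} [DecidableEq ι]
    (S : Finset V) (f : V → ι) {v : V} (hv : v ∈ S) :
    (blockGraph S f).degree v + 1 = Fintype.card V := by
  classical
  have : (blockGraph S f).neighborFinset v = univ.erase v := by
    rw [neighborFinset_eq_filter]
    ext w
    rw [mem_filter]
    simp only [blockGraph, mem_filter, mem_univ, true_and, mem_erase, and_true, ne_comm]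
    tauto
  rw [degree, this, card_erase_of_mem (mem_univ v), card_univ]
  have : 0 < Fintype.card V := Fintype.card_pos_iff.mpr ⟨v⟩
  omega

lemma blockGraph_degree_not_mem {V : Type*} [Fintype V] [DecidableEq V] {ι : Type*}
    [DecidableEq ι] (S : Finset V) (f : V → ι) {v : V} (hv : v ∉ S) :
    (blockGraph S f).degree v + 1
      = S.card + ((univ \ S).filter (fun w => f w = f v)).card := by
  classical
  set A : Finset V := S ∪ (univ \ S).filter (fun w => f w = f v) with hA
  have hvA : v ∈ A := by
    simp [hA, hv]
  have hnb : (blockGraph S f).neighborFinset v = A.erase v := by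
    rw [neighborFinset_eq_filter]
    ext w
    rw [mem_filter]
    simp only [hA, blockGraph, mem_filter, mem_univ, true_and, mem_erase, mem_union, mem_sdiff,
      ne_comm]
    constructor
    · rintro ⟨hne, h⟩
      refine ⟨hne, ?_⟩
      rcases h with h | h | h
      · exact absurd h hv
      · exact Or.inl h
      · by_cases hw : w ∈ S
        · exact Or.inl hw
        · exact Or.inr ⟨hw, h.symm⟩
    · rintro ⟨hne, h⟩
      refine ⟨hne, ?_⟩
      rcases h with h | ⟨-, h⟩
      · exact Or.inr (Or.inl h)
      · exact Or.inr (Or.inr h.symm)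
  have hdisj : Disjoint S ((univ \ S).filter (fun w => f w = f v)) := by
    refine Finset.disjoint_left.mpr ?_
    intro a ha ha'
    simp only [mem_filter, mem_sdiff] at ha'
    exact ha'.1.2 ha
  rw [degree, hnb, card_erase_of_mem hvA, hA, card_union_of_disjoint hdisj]
  have : 0 < A.card := card_pos.mpr ⟨v, hvA⟩
  simp only [hA, card_union_of_disjoint hdisj] at this
  omega

lemma blockGraph_card_edges {V : Type*} [Fintype V] [DecidableEq V] {ι : Type*} [DecidableEq ι]
    (S : Finset V) (f : V → ι) :
    (blockGraph S f).edgeFinset.card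
      = S.card * (univ \ S).card + S.card.choose 2
        + ∑ i ∈ (univ \ S).image f, (((univ \ S).filter (fun w => f w = i)).card).choose 2 := by
  classical
  set B : Finset V := univ \ S with hB
  set t : ι → ℕ := fun i => (B.filter (fun w => f w = i)).card with ht
  set G := blockGraph S f with hG
  set n := Fintype.card V with hn
  set s := S.card with hs
  set u := B.card with hu
  have hnsu : n = s + u := by
    have := Finset.card_sdiff_of_subset (Finset.subset_univ S)
    have hsn : s ≤ n := Finset.card_le_univ S
    simp only [← hB, card_univ, ← hn, ← hs, ← hu] at this ⊢
    omega
  have hsum : ∑ v, G.degree v = 2 * G.edgeFinset.card := G.sum_degrees_eq_twice_card_edges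
  have h1 : ∑ v ∈ S, (G.degree v + 1) = s * s + s * u := by
    rw [Finset.sum_congr rfl (fun v hv => blockGraph_degree_mem S f hv),
      Finset.sum_const, smul_eq_mul, ← hs, ← hn, hnsu]
    ring
  have h2 : ∑ v ∈ B, (G.degree v + 1) = u * s + ∑ v ∈ B, t (f v) := by
    have : ∀ v ∈ B, G.degree v + 1 = s + t (f v) := by
      intro v hv
      rw [hB, mem_sdiff] at hv
      exact blockGraph_degree_not_mem S f hv.2
    rw [Finset.sum_congr rfl this, Finset.sum_add_distrib, Finset.sum_const, smul_eq_mul]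
  have h3 : ∑ v ∈ B, t (f v) = ∑ i ∈ B.image f, t i * t i := by
    rw [Finset.sum_comp]
    exact Finset.sum_congr rfl (fun i _ => by rw [smul_eq_mul, ht])
  have h4 : ∑ i ∈ B.image f, (2 * (t i).choose 2 + t i) = ∑ i ∈ B.image f, t i * t i :=
    Finset.sum_congr rfl (fun i _ => two_mul_choose_two (t i))
  have h5 : ∑ i ∈ B.image f, t i = u := (Finset.card_eq_sum_card_image f B).symm
  have h6 : ∑ v ∈ B, (G.degree v + 1) + ∑ v ∈ S, (G.degree v + 1)
      = 2 * G.edgeFinset.card + n := by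
    rw [hB, Finset.sum_sdiff (Finset.subset_univ S), Finset.sum_add_distrib, hsum]
    simp [hn, Finset.card_univ]
  have h4' : 2 * ∑ i ∈ B.image f, (t i).choose 2 + u = ∑ i ∈ B.image f, t i * t i := by
    rw [← h4, Finset.sum_add_distrib, Finset.mul_sum, h5]
  have hss : 2 * s.choose 2 + s = s * s := two_mul_choose_two s
  have hgoal : 2 * G.edgeFinset.card
      = 2 * (s * u + s.choose 2 + ∑ i ∈ B.image f, (t i).choose 2) := by
    rw [h2, h1, h3] at h6
    linarith [h6, h4', hss, hnsu]
  have e1 : ∑ i ∈ B.image f, ((B.filter (fun w => f w = i)).card).choose 2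
      = ∑ i ∈ B.image f, (t i).choose 2 := rfl
  linarith [hgoal, e1]

lemma reachable_const {V α : Type*} {G : SimpleGraph V} (g : V → α)
    (h : ∀ u w, G.Adj u w → g u = g w) {u w : V} (hr : G.Reachable u w) : g u = g w := by
  obtain ⟨p⟩ := hr
  induction p with
  | nil => rfl
  | cons hadj _ ih => exact (h _ _ hadj).trans ih

lemma blockGraph_vertexDisconnects {V : Type*} [Fintype V] [DecidableEq V] {ι : Type*}
    [DecidableEq ι] (S : Finset V) (f : V → ι) (k : ℕ)
    (hfib : ∀ v : V, v ∉ S →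
      (((Finset.univ \ S).filter (fun w => f w = f v)).card ≤ k)) :
    vertexDisconnects (blockGraph S f) k ↑S := by
  intro v
  have hv : (v : V) ∉ S := v.2
  set G' := (blockGraph S f).induce (↑S : Set V)ᶜ with hG'
  have hadjf : ∀ a b : ↥(↑S : Set V)ᶜ, G'.Adj a b → f ↑a = f ↑b := by
    intro a b hadj
    obtain ⟨hne, hor⟩ := hadj
    rcases hor with h | h | h
    · exact absurd h a.2
    · exact absurd h b.2
    · exact h
  have hsub : (G'.connectedComponentMk v).supp ⊆ {w : ↥(↑S : Set V)ᶜ | f ↑w = f ↑v} := by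
    intro w hw
    rw [ConnectedComponent.mem_supp_iff] at hw
    have hr : G'.Reachable w v := ConnectedComponent.eq.mp hw
    exact reachable_const (fun x : ↥(↑S : Set V)ᶜ => f ↑x) hadjf hr
  have himg : Subtype.val '' {w : ↥(↑S : Set V)ᶜ | f ↑w = f ↑v}
      = ↑((Finset.univ \ S).filter (fun w => f w = f v)) := by
    ext u
    simp only [Set.mem_image, Set.mem_setOf_eq, Finset.coe_filter, Finset.mem_sdiff,
      Finset.mem_univ, true_and, Set.mem_setOf_eq]
    constructor
    · rintro ⟨a, ha, rfl⟩
      exact ⟨a.2, ha⟩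
    · rintro ⟨hu, hfu⟩
      exact ⟨⟨u, by simpa using hu⟩, hfu, rfl⟩
  have hcard : ({w : ↥(↑S : Set V)ᶜ | f ↑w = f ↑v}).ncard
      = ((Finset.univ \ S).filter (fun w => f w = f v)).card := by
    rw [← Set.ncard_image_of_injective _ Subtype.val_injective, himg, Set.ncard_coe_finset]
  calc (G'.connectedComponentMk v).supp.ncard
      ≤ ({w : ↥(↑S : Set V)ᶜ | f ↑w = f ↑v}).ncard := Set.ncard_le_ncard hsub (Set.toFinite _)
    _ ≤ k := by rw [hcard]; exact hfib v hv

lemma COv_lower {V : Type*} [Fintype V] {G : SimpleGraph V} {k κ : ℕ} (T : Set V)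
    (hT : T.ncard = κ) (hTadj : ∀ u ∈ T, ∀ w, u ≠ w → G.Adj u w)
    (hbig : κ + k ≤ Fintype.card V) {c : ℕ} (S : Set V) (hSc : S.ncard = c)
    (hdis : vertexDisconnects G k S) : κ ≤ c := by
  by_contra hlt
  push_neg at hlt
  have hnsub : ¬ T ⊆ S := by
    intro hsub
    have := Set.ncard_le_ncard hsub (Set.toFinite S)
    omega
  obtain ⟨u, huT, huS⟩ := Set.not_subset.mp hnsub
  set u' : ↥Sᶜ := ⟨u, huS⟩ with hu'
  have hall : ∀ w : ↥Sᶜ, (G.induce Sᶜ).connectedComponentMk w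
      = (G.induce Sᶜ).connectedComponentMk u' := by
    intro w
    by_cases hw : w = u'
    · rw [hw]
    · refine ConnectedComponent.sound ?_
      refine Adj.reachable ?_
      show G.Adj ↑w ↑u'
      exact (hTadj u huT ↑w (fun h => hw (Subtype.ext (by rw [hu']; exact h.symm)))).symm
  have hsupp : ((G.induce Sᶜ).connectedComponentMk u').supp = Set.univ := by
    ext w
    simp only [ConnectedComponent.mem_supp_iff, Set.mem_univ, iff_true]
    exact hall w
  have hk2 := hdis u'
  rw [hsupp, Set.ncard_univ, Nat.card_coe_set_eq] at hk2
  have hcompl : S.ncard + Sᶜ.ncard = Fintype.card V := by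
    rw [Set.ncard_add_ncard_compl, Nat.card_eq_fintype_card]
  omega

lemma card_filter_interval (n a b : ℕ) (hbn : b ≤ n) :
    ((Finset.univ : Finset (Fin n)).filter (fun v => a ≤ v.val ∧ v.val < b)).card = b - a := by
  rw [← Nat.card_Ico a b]
  apply Finset.card_bij (fun v _ => v.val)
  · intro v hv
    simp only [Finset.mem_filter] at hv
    exact Finset.mem_Ico.mpr hv.2
  · intro v _ w _ h
    exact Fin.ext h
  · intro m hm
    rw [Finset.mem_Ico] at hm
    exact ⟨⟨m, lt_of_lt_of_le hm.2 hbn⟩, Finset.mem_filter.mpr ⟨Finset.mem_univ _, hm.1, hm.2⟩, rfl⟩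

theorem maxEdges_COv_eq (n κ p' q' : ℕ) (r : ℝ) (hr0 : 0 < r) (hr1 : r < 1)
    (k : ℕ) (hk : k = ⌊r * n⌋₊) (hk1 : 1 ≤ k) (hκ : κ ≤ n - k)
    (hn : n - κ = p' * k + q') (hq : q' < k) :
    IsGreatest {m | ∃ G : SimpleGraph (Fin n), G.edgeSet.ncard = m ∧ COv G k = κ}
      (κ * (n - κ) + κ.choose 2 + p' * k.choose 2 + q'.choose 2) := by
  have hn0 : 0 < n := by
    rcases Nat.eq_zero_or_pos n with h | h
    · subst h; simp at hk; omega
    · exact h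
  have hkn : k < n := by
    have hrn : (0:ℝ) ≤ r * n := by positivity
    have hnR : (0:ℝ) < (n:ℝ) := by exact_mod_cast hn0
    have : r * n < (n:ℝ) := by nlinarith
    rw [hk]
    exact (Nat.floor_lt hrn).mpr this
  have hκk : κ + k ≤ n := by omega
  have hnsum : n = κ + (p' * k + q') := by omega
  have hk0 : 0 < k := hk1
  -- the extremal graph
  set S : Finset (Fin n) := Finset.univ.filter (fun v => v.val < κ) with hSdef
  set f : Fin n → ℕ := fun v => (v.val - κ) / k with hfdef
  have hScard : S.card = κ := by
    have : S = Finset.univ.filter (fun v : Fin n => 0 ≤ v.val ∧ v.val < κ) := by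
      ext v; simp [hSdef]
    rw [this, card_filter_interval n 0 κ (by omega)]
    omega
  have hBeq : (Finset.univ \ S : Finset (Fin n))
      = Finset.univ.filter (fun v => ¬ v.val < κ) := by
    rw [hSdef, Finset.filter_not, Finset.sdiff_eq_filter]  -- maybe wrong; fix below
  have hBcard : (Finset.univ \ S : Finset (Fin n)).card = n - κ := by
    rw [Finset.card_sdiff_of_subset (Finset.subset_univ S), hScard, Finset.card_univ, Fintype.card_fin]
  -- fiber cardinalities
  have hfiber : ∀ j : ℕ, j ≤ p' →
      ((Finset.univ \ S).filter (fun w => f w = j)).card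
        = min (κ + j * k + k) n - (κ + j * k) := by
    intro j hj
    have hjn : κ + j * k ≤ n := by
      have : j * k ≤ p' * k := Nat.mul_le_mul_right k hj
      omega
    have hexp : (j + 1) * k = j * k + k := by ring
    have : (Finset.univ \ S).filter (fun w => f w = j)
        = Finset.univ.filter (fun v : Fin n => κ + j * k ≤ v.val ∧ v.val < min (κ + j * k + k) n) := by
      ext v
      simp only [Finset.mem_filter, Finset.mem_sdiff, Finset.mem_univ, true_and, hSdef,
        Finset.mem_filter, hfdef, not_lt, lt_min_iff]
      constructor
      · rintro ⟨hκv, hdiv⟩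
        have key : v.val - κ = j * k + (v.val - κ) % k := by
          conv_lhs => rw [← Nat.div_add_mod' (v.val - κ) k]
          rw [hdiv]
        obtain ⟨m, hm1, hm2⟩ : ∃ m, m < k ∧ v.val - κ = j * k + m :=
          ⟨_, Nat.mod_lt _ hk0, key⟩
        exact ⟨by omega, by omega, v.isLt⟩
      · rintro ⟨h1, h2, h3⟩
        have hle : j ≤ (v.val - κ) / k := (Nat.le_div_iff_mul_le hk0).mpr (by omega)
        have hlt : (v.val - κ) / k < j + 1 := (Nat.div_lt_iff_lt_mul hk0).mpr (by omega)
        exact ⟨by omega, by omega⟩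
    rw [this, card_filter_interval n _ _ (by omega)]
  have hfub : ∀ v : Fin n, v ∉ S → f v ≤ p' := by
    intro v hv
    simp only [hSdef, Finset.mem_filter, Finset.mem_univ, true_and, not_lt] at hv
    have hvn : v.val < n := v.isLt
    have hexp2 : (p' + 1) * k = p' * k + k := by ring
    have : v.val - κ < (p' + 1) * k := by
      have := v.isLt; omega
    have := (Nat.div_lt_iff_lt_mul hk0).mpr this
    simp only [hfdef]
    omega
  have hfibk : ∀ v : Fin n, v ∉ S →
      ((Finset.univ \ S).filter (fun w => f w = f v)).card ≤ k := by
    intro v hv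
    rw [hfiber (f v) (hfub v hv)]
    omega
  constructor
  · -- membership
    refine ⟨blockGraph S f, ?_, ?_⟩
    · -- edge count
      rw [← SimpleGraph.coe_edgeFinset, Set.ncard_coe_finset, blockGraph_card_edges]
      have himg : (Finset.univ \ S).image f ⊆ Finset.range (p' + 1) := by
        intro i hi
        obtain ⟨v, hv, rfl⟩ := Finset.mem_image.mp hi
        rw [Finset.mem_sdiff] at hv
        exact Finset.mem_range.mpr (Nat.lt_succ_of_le (hfub v hv.2))
      have hzero : ∀ i ∈ Finset.range (p' + 1), i ∉ (Finset.univ \ S).image f →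
          (((Finset.univ \ S).filter (fun w => f w = i)).card).choose 2 = 0 := by
        intro i _ hi
        have : (Finset.univ \ S).filter (fun w => f w = i) = ∅ := by
          rw [Finset.filter_eq_empty_iff]
          intro w hw hfw
          exact hi (Finset.mem_image.mpr ⟨w, hw, hfw⟩)
        rw [this]
        simp
      rw [Finset.sum_subset himg hzero, Finset.sum_range_succ]
      have hterm : ∀ j ∈ Finset.range p',
          (((Finset.univ \ S).filter (fun w => f w = j)).card).choose 2 = k.choose 2 := by
        intro j hj
        rw [Finset.mem_range] at hj
        rw [hfiber j (le_of_lt hj)]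
        congr 1
        have : j * k + k ≤ p' * k := by
          have h1 : (j + 1) * k ≤ p' * k := Nat.mul_le_mul_right k hj
          have h2 : (j + 1) * k = j * k + k := by ring
          omega
        omega
      have hlast : (((Finset.univ \ S).filter (fun w => f w = p')).card).choose 2
          = q'.choose 2 := by
        rw [hfiber p' le_rfl]
        congr 1
        omega
      rw [Finset.sum_congr rfl hterm, Finset.sum_const, Finset.card_range, smul_eq_mul,
        hlast, hScard, hBcard]
      ring
    · -- COv = κ
      apply le_antisymm
      · apply Nat.sInf_le
        exact ⟨↑S, by rw [Set.ncard_coe_finset, hScard],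
          blockGraph_vertexDisconnects S f k hfibk⟩
      · refine le_csInf ⟨κ, ↑S, by rw [Set.ncard_coe_finset, hScard],
          blockGraph_vertexDisconnects S f k hfibk⟩ ?_
        rintro c ⟨S', hS', hdis'⟩
        refine COv_lower (↑S : Set (Fin n)) (by rw [Set.ncard_coe_finset, hScard]) ?_
          (by rw [Fintype.card_fin]; omega) S' hS' hdis'
        intro u hu w hne
        exact ⟨hne, Or.inl (by exact_mod_cast hu)⟩
  · -- upper bound
    rintro m ⟨G, hGE, hGCO⟩
    classical
    have hne : {c | ∃ S : Set (Fin n), S.ncard = c ∧ vertexDisconnects G k S}.Nonempty := by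
      refine ⟨n, Set.univ, ?_, ?_⟩
      · rw [Set.ncard_univ, Nat.card_eq_fintype_card, Fintype.card_fin]
      · intro v
        exact absurd v.2 (by simp)
    have hmem : κ ∈ {c | ∃ S : Set (Fin n), S.ncard = c ∧ vertexDisconnects G k S} := by
      rw [← hGCO]
      exact Nat.sInf_mem hne
    obtain ⟨T, hT, hdis⟩ := hmem
    set SF := T.toFinite.toFinset with hSFdef
    have hSFcoe : (↑SF : Set (Fin n)) = T := Set.Finite.coe_toFinset _
    have hSFmem : ∀ v : Fin n, v ∈ SF ↔ v ∈ T := fun v => Set.Finite.mem_toFinset _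
    have hSFcard : SF.card = κ := by rw [← Set.ncard_coe_finset, hSFcoe, hT]
    set g : Fin n → Option ((G.induce Tᶜ).ConnectedComponent) := fun v =>
      if h : v ∈ T then none else some ((G.induce Tᶜ).connectedComponentMk ⟨v, h⟩) with hgdef
    have hle : G ≤ blockGraph SF g := by
      intro v w hadj
      refine ⟨hadj.ne, ?_⟩
      by_cases hv : v ∈ T
      · exact Or.inl ((hSFmem v).mpr hv)
      by_cases hw : w ∈ T
      · exact Or.inr (Or.inl ((hSFmem w).mpr hw))
      refine Or.inr (Or.inr ?_)
      simp only [hgdef, dif_neg hv, dif_neg hw, Option.some_inj]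
      apply ConnectedComponent.sound
      apply Adj.reachable
      show G.Adj ↑(⟨v, hv⟩ : ↥Tᶜ) ↑(⟨w, hw⟩ : ↥Tᶜ)
      exact hadj
    have hmle : m ≤ (blockGraph SF g).edgeFinset.card := by
      rw [← hGE, ← Set.ncard_coe_finset, SimpleGraph.coe_edgeFinset]
      exact Set.ncard_le_ncard (SimpleGraph.edgeSet_mono hle) (Set.toFinite _)
    have hBcard' : (Finset.univ \ SF : Finset (Fin n)).card = n - κ := by
      rw [Finset.card_sdiff_of_subset (Finset.subset_univ SF), hSFcard, Finset.card_univ, Fintype.card_fin]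
    have hfibk' : ∀ i ∈ (Finset.univ \ SF).image g,
        ((Finset.univ \ SF).filter (fun w => g w = i)).card ≤ k := by
      intro i hi
      obtain ⟨v, hv, rfl⟩ := Finset.mem_image.mp hi
      rw [Finset.mem_sdiff] at hv
      have hvT : v ∉ T := fun h => hv.2 ((hSFmem v).mpr h)
      have hset : (↑((Finset.univ \ SF).filter (fun w => g w = g v)) : Set (Fin n))
          = Subtype.val '' (((G.induce Tᶜ).connectedComponentMk ⟨v, hvT⟩).supp) := by
        ext u
        simp only [Finset.coe_filter, Finset.mem_sdiff, Finset.mem_univ, true_and,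
          Set.mem_setOf_eq, Set.mem_image, ConnectedComponent.mem_supp_iff]
        constructor
        · rintro ⟨huSF, hgu⟩
          have huT : u ∉ T := fun h => huSF ((hSFmem u).mpr h)
          rw [hgdef] at hgu
          simp only [dif_neg huT, dif_neg hvT, Option.some_inj] at hgu
          exact ⟨⟨u, huT⟩, hgu, rfl⟩
        · rintro ⟨⟨u', hu'⟩, hc, rfl⟩
          have hu'T : u' ∉ T := hu'
          refine ⟨fun h => hu'T ((hSFmem u').mp h), ?_⟩
          rw [hgdef]
          simp only [dif_neg hu'T, dif_neg hvT, Option.some_inj]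
          exact hc
      have : ((Finset.univ \ SF).filter (fun w => g w = g v)).card
          = (((G.induce Tᶜ).connectedComponentMk ⟨v, hvT⟩).supp).ncard := by
        rw [← Set.ncard_coe_finset, hset, Set.ncard_image_of_injective _ Subtype.val_injective]
      rw [this]
      exact hdis _
    have hsum : ∑ i ∈ (Finset.univ \ SF).image g,
        ((Finset.univ \ SF).filter (fun w => g w = i)).card = p' * k + q' := by
      rw [← Finset.card_eq_sum_card_image, hBcard', hn]
    have hpack := packing hk1 ((Finset.univ \ SF).image g)
      (fun i => ((Finset.univ \ SF).filter (fun w => g w = i)).card) hfibk' p' q' hq hsum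
    have hpack' : ∑ i ∈ (Finset.univ \ SF).image g,
        (((Finset.univ \ SF).filter (fun w => g w = i)).card).choose 2
        ≤ p' * k.choose 2 + q'.choose 2 := hpack
    have hcount := blockGraph_card_edges SF g
    rw [hSFcard, hBcard'] at hcount
    omega
end

section
/- Fix $n$ and $0 < r < 1$ with $k = \lfloor rn \rfloor \geq 1$, and write $n = pk + q$ with $0 \leq q < k$. Let $M = p\binom{k}{2} + \binom{q}{2}$. Then for every $0 \leq m \leq \binom{n}{2}$: $\min_{G \in G(n,m)} CO_e^r(G) = 0$ if $m \leq M$, and $\min_{G \in G(n,m)} CO_e^r(G) = m - M$ if $m > M$. -/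
open SimpleGraph

open Finset

lemma chooseTwoSucc (t : ℕ) : (t + 1).choose 2 = t.choose 2 + t := by
  rw [Nat.choose_succ_succ t 1, Nat.choose_one_right]; exact Nat.add_comm _ _

lemma chooseTwoAdd (a b : ℕ) : (a + b).choose 2 = a.choose 2 + b.choose 2 + a * b := by
  induction b with
  | zero => simp
  | succ b ih =>
    have h1 : (a + (b + 1)).choose 2 = (a + b).choose 2 + (a + b) := by
      rw [← chooseTwoSucc (a + b)]; ring_nf
    have h2 := chooseTwoSucc b
    have h3 : a * (b + 1) = a * b + a := by ring
    omega

/-- max edges function -/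
def Mfun (k n : ℕ) : ℕ := (n / k) * k.choose 2 + (n % k).choose 2

lemma Mfun_eq {k b : ℕ} (hk : 0 < k) (a : ℕ) (hb : b < k) :
    Mfun k (k * a + b) = a * k.choose 2 + b.choose 2 := by
  unfold Mfun
  rw [Nat.mul_add_div hk, Nat.mul_add_mod, Nat.div_eq_of_lt hb, Nat.mod_eq_of_lt hb]
  ring_nf

lemma Mfun_step {k : ℕ} (hk : 0 < k) {c : ℕ} (hc : c ≤ k) (n : ℕ) :
    c.choose 2 + Mfun k n ≤ Mfun k (c + n) := by
  obtain ⟨a, b, hb, rfl⟩ : ∃ a b, b < k ∧ n = k * a + b :=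
    ⟨n / k, n % k, Nat.mod_lt _ hk, (Nat.div_add_mod n k).symm⟩
  have hM := Mfun_eq hk a hb
  by_cases hcb : c + b < k
  · have h2 : Mfun k (c + (k * a + b)) = a * k.choose 2 + (c + b).choose 2 := by
      have h : c + (k * a + b) = k * a + (c + b) := by ring
      rw [h, Mfun_eq hk a hcb]
    have := chooseTwoAdd c b
    omega
  · obtain ⟨d, hd⟩ : ∃ d, c + b = k + d := ⟨c + b - k, by omega⟩
    have hdk : d < k := by omega
    have h2 : Mfun k (c + (k * a + b)) = (a + 1) * k.choose 2 + d.choose 2 := by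
      have hkk : k * (a + 1) = k * a + k := by ring
      have h : c + (k * a + b) = k * (a + 1) + d := by omega
      rw [h, Mfun_eq hk (a + 1) hdk]
    have key : k * d ≤ c * b := by
      obtain ⟨x, hx⟩ : ∃ x, c = d + x := ⟨c - d, by omega⟩
      obtain ⟨y, hy⟩ : ∃ y, b = d + y := ⟨b - d, by omega⟩
      have hk' : k = d + x + y := by omega
      subst hx hy hk'
      nlinarith
    have i1 := chooseTwoAdd c b
    have i2 := chooseTwoAdd k d
    have e1 : (a + 1) * k.choose 2 = a * k.choose 2 + k.choose 2 := by ring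
    rw [hd] at i1
    omega

lemma Mfun_sum {k : ℕ} (hk : 0 < k) {β : Type*} (s : Finset β) (f : β → ℕ)
    (hf : ∀ b ∈ s, f b ≤ k) : (∑ b ∈ s, (f b).choose 2) ≤ Mfun k (∑ b ∈ s, f b) := by
  classical
  induction s using Finset.induction_on with
  | empty => simp [Mfun]
  | @insert a s ha ih =>
    rw [Finset.sum_insert ha, Finset.sum_insert ha]
    calc (f a).choose 2 + ∑ b ∈ s, (f b).choose 2
        ≤ (f a).choose 2 + Mfun k (∑ b ∈ s, f b) := by
          have := ih (fun b hb => hf b (Finset.mem_insert_of_mem hb)); omega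
      _ ≤ Mfun k (f a + ∑ b ∈ s, f b) := Mfun_step hk (hf a (Finset.mem_insert_self a s)) _

section Sym2Count

variable {α : Type*} [DecidableEq α]

lemma card_sym2_not_diag (s : Finset α) :
    #(s.sym2.filter fun e => ¬ e.IsDiag) = (#s).choose 2 := by
  have hdiag : s.sym2.filter (fun e => e.IsDiag) = s.image Sym2.diag := by
    ext e
    simp only [Finset.mem_filter, Finset.mem_image, Finset.mem_sym2_iff]
    constructor
    · rintro ⟨hmem, hd⟩
      obtain ⟨a, rfl⟩ := (⟨_, Sym2.diag_diagElem hd⟩ : ∃ a, Sym2.diag a = e)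
      exact ⟨a, hmem a (by simp [Sym2.diag]), rfl⟩
    · rintro ⟨a, ha, rfl⟩
      refine ⟨fun y hy => ?_, by simp [Sym2.diag]⟩
      simp only [Sym2.diag, Sym2.mem_iff] at hy
      rcases hy with rfl | rfl <;> exact ha
  have h1 := Finset.card_filter_add_card_filter_not
    (s := s.sym2) (fun e : Sym2 α => e.IsDiag)
  rw [hdiag, Finset.card_image_of_injective _ Sym2.diag_injective, Finset.card_sym2] at h1
  have h2 := chooseTwoSucc #s
  omega

end Sym2Count

section Fiber

variable {n : ℕ} {β : Type*} [Fintype β] [DecidableEq β]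

lemma fiber_filter_eq (H : SimpleGraph (Fin n)) [DecidableRel H.Adj]
    (g : Fin n → β) (hg : ∀ {u v}, H.Adj u v → g u = g v) (b : β)
    (hg2 : ∀ u v, u ≠ v → g u = g v → g u = b → H.Adj u v) :
    H.edgeFinset.filter (fun e => g e.out.1 = b)
      = ((Finset.univ.filter fun v => g v = b).sym2.filter fun e => ¬ e.IsDiag) := by
  ext e
  induction e with
  | _ x y =>
    simp only [Finset.mem_filter, mem_edgeFinset, mem_edgeSet, Finset.mem_sym2_iff,
      Sym2.mem_iff, Finset.mem_univ, true_and]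
    have hout : s(x, y).out.1 ∈ s(x, y) := Sym2.out_fst_mem _
    rw [Sym2.mem_iff] at hout
    constructor
    · rintro ⟨hadj, hb⟩
      have hxy : g x = g y := hg hadj
      have hx : g x = b := by rcases hout with h | h; · rw [← h]; exact hb
                              · rw [hxy, ← h]; exact hb
      refine ⟨fun a ha => ?_, by simpa [Sym2.mk_isDiag_iff] using hadj.ne⟩
      rcases ha with rfl | rfl
      · exact hx
      · rw [← hxy]; exact hx
    · rintro ⟨hmem, hd⟩
      rw [Sym2.mk_isDiag_iff] at hd
      have hx := hmem x (Or.inl rfl)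
      have hy := hmem y (Or.inr rfl)
      have hadj : H.Adj x y := hg2 x y hd (hx.trans hy.symm) hx
      refine ⟨hadj, ?_⟩
      rcases hout with h | h <;> rw [h] <;> assumption

lemma fiber_filter_subset (H : SimpleGraph (Fin n)) [DecidableRel H.Adj]
    (g : Fin n → β) (hg : ∀ {u v}, H.Adj u v → g u = g v) (b : β) :
    H.edgeFinset.filter (fun e => g e.out.1 = b)
      ⊆ ((Finset.univ.filter fun v => g v = b).sym2.filter fun e => ¬ e.IsDiag) := by
  intro e
  induction e with
  | _ x y =>
    simp only [Finset.mem_filter, mem_edgeFinset, mem_edgeSet, Finset.mem_sym2_iff,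
      Sym2.mem_iff, Finset.mem_univ, true_and]
    have hout : s(x, y).out.1 ∈ s(x, y) := Sym2.out_fst_mem _
    rw [Sym2.mem_iff] at hout
    rintro ⟨hadj, hb⟩
    have hxy : g x = g y := hg hadj
    have hx : g x = b := by rcases hout with h | h; · rw [← h]; exact hb
                            · rw [hxy, ← h]; exact hb
    refine ⟨fun a ha => ?_, by simpa [Sym2.mk_isDiag_iff] using hadj.ne⟩
    rcases ha with rfl | rfl
    · exact hx
    · rw [← hxy]; exact hx

lemma edge_card_le_fiber_sum (H : SimpleGraph (Fin n)) [DecidableRel H.Adj]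
    (g : Fin n → β) (hg : ∀ {u v}, H.Adj u v → g u = g v) :
    #(H.edgeFinset) ≤ ∑ b : β, (#(Finset.univ.filter fun v => g v = b)).choose 2 := by
  rw [Finset.card_eq_sum_card_fiberwise
    (f := fun e : Sym2 (Fin n) => g e.out.1) (t := Finset.univ) (fun x _ => Finset.mem_univ _)]
  refine Finset.sum_le_sum fun b _ => ?_
  calc #(H.edgeFinset.filter fun e => g e.out.1 = b)
      ≤ #((Finset.univ.filter fun v => g v = b).sym2.filter fun e => ¬ e.IsDiag) :=
        Finset.card_le_card (fiber_filter_subset H g hg b)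
    _ = (#(Finset.univ.filter fun v => g v = b)).choose 2 := card_sym2_not_diag _

lemma edge_card_eq_fiber_sum (H : SimpleGraph (Fin n)) [DecidableRel H.Adj]
    (g : Fin n → β) (hg : ∀ {u v}, H.Adj u v → g u = g v)
    (hg2 : ∀ u v, u ≠ v → g u = g v → H.Adj u v) :
    #(H.edgeFinset) = ∑ b : β, (#(Finset.univ.filter fun v => g v = b)).choose 2 := by
  rw [Finset.card_eq_sum_card_fiberwise
    (f := fun e : Sym2 (Fin n) => g e.out.1) (t := Finset.univ) (fun x _ => Finset.mem_univ _)]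
  refine Finset.sum_congr rfl fun b _ => ?_
  rw [fiber_filter_eq H g hg b (fun u v h1 h2 _ => hg2 u v h1 h2), card_sym2_not_diag]

lemma vertex_fiber_sum (g : Fin n → β) :
    n = ∑ b : β, #(Finset.univ.filter fun v => g v = b) := by
  have := Finset.card_eq_sum_card_fiberwise
    (f := g) (s := Finset.univ) (t := Finset.univ) (fun x _ => Finset.mem_univ _)
  simpa using this

end Fiber

section FailGeneral

variable {n k : ℕ}

lemma supp_ncard_eq_filter (H : SimpleGraph (Fin n)) [DecidableEq H.ConnectedComponent]
    (c : H.ConnectedComponent) :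
    c.supp.ncard = #(Finset.univ.filter fun u => H.connectedComponentMk u = c) := by
  classical
  have h : c.supp = ↑(Finset.univ.filter fun u => H.connectedComponentMk u = c) := by
    ext u
    simp [ConnectedComponent.mem_supp_iff]
  rw [h, Set.ncard_coe_finset]

lemma edge_le_Mfun (hk : 0 < k) (H : SimpleGraph (Fin n)) [DecidableRel H.Adj]
    (hfail : failureState H k) : #H.edgeFinset ≤ Mfun k n := by
  classical
  haveI : Fintype H.ConnectedComponent := Fintype.ofFinite _
  have hg : ∀ {u v : Fin n}, H.Adj u v → H.connectedComponentMk u = H.connectedComponentMk v :=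
    fun h => ConnectedComponent.sound h.reachable
  have h2 : ∀ b : H.ConnectedComponent,
      #(Finset.univ.filter fun v => H.connectedComponentMk v = b) ≤ k := by
    intro b
    induction b using ConnectedComponent.ind with
    | _ v =>
      have h := hfail v
      rwa [supp_ncard_eq_filter] at h
  calc #H.edgeFinset
      ≤ ∑ b : H.ConnectedComponent,
          (#(Finset.univ.filter fun v => H.connectedComponentMk v = b)).choose 2 :=
        edge_card_le_fiber_sum H _ hg
    _ ≤ Mfun k (∑ b : H.ConnectedComponent,
          #(Finset.univ.filter fun v => H.connectedComponentMk v = b)) :=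
        Mfun_sum hk _ _ (fun b _ => h2 b)
    _ = Mfun k n := congrArg (Mfun k) (vertex_fiber_sum _).symm

lemma failureState_mono {G G' : SimpleGraph (Fin n)} (h : G ≤ G')
    (hf : failureState G' k) : failureState G k := by
  intro v
  refine le_trans (Set.ncard_le_ncard ?_ (Set.toFinite _)) (hf v)
  intro u hu
  rw [ConnectedComponent.mem_supp_iff, ConnectedComponent.eq] at hu ⊢
  exact hu.mono h

end FailGeneral

section Blocks

variable {n k : ℕ}

lemma block_card (hk : 0 < k) (t : ℕ) :
    #(Finset.univ.filter fun v : Fin n => v.val / k = t) = min k (n - t * k) := by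
  have hc : k * t = t * k := Nat.mul_comm k t
  have hmin1 := min_le_left k (n - t * k)
  have hmin2 := min_le_right k (n - t * k)
  rw [← Finset.card_range (min k (n - t * k))]
  refine Finset.card_bij' (fun (v : Fin n) (_ : v ∈ _) => v.val - t * k)
    (fun i (hi : i ∈ Finset.range (min k (n - t * k))) => (⟨t * k + i, by
      have hi' : i < min k (n - t * k) := Finset.mem_range.mp hi
      omega⟩ : Fin n)) ?_ ?_ ?_ ?_
  · intro v hv
    simp only [Finset.mem_filter, Finset.mem_univ, true_and] at hv
    have h1 : k * (v.val / k) + v.val % k = v.val := Nat.div_add_mod v.val k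
    have h2 : v.val % k < k := Nat.mod_lt _ hk
    have h3 : v.val < n := v.isLt
    rw [hv] at h1
    simp only [Finset.mem_range]
    omega
  · intro i hi
    have hi' : i < min k (n - t * k) := Finset.mem_range.mp hi
    simp only [Finset.mem_filter, Finset.mem_univ, true_and]
    have h0 : (k * t + i) / k = t + i / k := Nat.mul_add_div hk t i
    have h4 : i / k = 0 := Nat.div_eq_of_lt (by omega)
    have h5 : t * k + i = k * t + i := by omega
    simp only [h5, h0, h4, Nat.add_zero]
  · intro v hv
    simp only [Finset.mem_filter, Finset.mem_univ, true_and] at hv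
    have h1 : k * (v.val / k) + v.val % k = v.val := Nat.div_add_mod v.val k
    have h2 : v.val % k < k := Nat.mod_lt _ hk
    rw [hv] at h1
    apply Fin.ext
    simp only
    omega
  · intro i hi
    have hi' : i < min k (n - t * k) := Finset.mem_range.mp hi
    simp only
    omega

/-- union of cliques on blocks of `k` consecutive vertices -/
def blockG (n k : ℕ) : SimpleGraph (Fin n) :=
  SimpleGraph.fromRel (fun u v => u.val / k = v.val / k)

lemma blockG_adj {u v : Fin n} : (blockG n k).Adj u v ↔ u ≠ v ∧ u.val / k = v.val / k := by
  simp only [blockG, fromRel_adj]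
  constructor
  · rintro ⟨h1, h2 | h2⟩ <;> exact ⟨h1, by omega⟩
  · rintro ⟨h1, h2⟩; exact ⟨h1, Or.inl h2⟩

lemma blockG_walk {u v : Fin n} (w : (blockG n k).Walk u v) : u.val / k = v.val / k := by
  induction w with
  | nil => rfl
  | cons hadj p ih => exact (blockG_adj.1 hadj).2.trans ih

lemma blockG_reach {u v : Fin n} (h : (blockG n k).Reachable u v) :
    u.val / k = v.val / k :=
  h.elim fun w => blockG_walk w

lemma blockG_failure (hk : 0 < k) : failureState (blockG n k) k := by
  intro v
  have hsub : ((blockG n k).connectedComponentMk v).supp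
      ⊆ ↑(Finset.univ.filter fun u : Fin n => u.val / k = v.val / k) := by
    intro u hu
    rw [ConnectedComponent.mem_supp_iff, ConnectedComponent.eq] at hu
    simp only [Finset.coe_filter, Finset.mem_univ, true_and, Set.mem_setOf_eq]
    exact blockG_reach hu
  calc ((blockG n k).connectedComponentMk v).supp.ncard
      ≤ (↑(Finset.univ.filter fun u : Fin n => u.val / k = v.val / k) : Set (Fin n)).ncard :=
        Set.ncard_le_ncard hsub (Set.toFinite _)
    _ = #(Finset.univ.filter fun u : Fin n => u.val / k = v.val / k) := Set.ncard_coe_finset _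
    _ = min k (n - (v.val / k) * k) := block_card hk _
    _ ≤ k := min_le_left _ _

lemma blockG_card (p q : ℕ) (hk : 0 < k) (hn : n = p * k + q) (hq : q < k)
    [DecidableRel (blockG n k).Adj] :
    #(blockG n k).edgeFinset = p * k.choose 2 + q.choose 2 := by
  classical
  have hdiv : ∀ v : Fin n, v.val / k < p + 1 := by
    intro v
    have h3 : v.val < n := v.isLt
    rw [Nat.div_lt_iff_lt_mul hk]
    have : (p + 1) * k = p * k + k := by ring
    omega
  set g : Fin n → Fin (p + 1) := fun v => ⟨v.val / k, hdiv v⟩ with hgdef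
  have hg : ∀ {u v : Fin n}, (blockG n k).Adj u v → g u = g v := by
    intro u v h
    exact Fin.ext (blockG_adj.1 h).2
  have hg2 : ∀ u v : Fin n, u ≠ v → g u = g v → (blockG n k).Adj u v := by
    intro u v h1 h2
    exact blockG_adj.2 ⟨h1, congrArg Fin.val h2⟩
  rw [edge_card_eq_fiber_sum (blockG n k) g hg hg2]
  have hsize : ∀ j : Fin (p + 1),
      #(Finset.univ.filter fun v => g v = j) = min k (n - j.val * k) := by
    intro j
    rw [Finset.filter_congr (fun v _ => by
      simp only [hgdef, Fin.ext_iff] : ∀ v ∈ Finset.univ, (g v = j ↔ v.val / k = j.val))]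
    exact block_card hk _
  calc ∑ j : Fin (p + 1), (#(Finset.univ.filter fun v => g v = j)).choose 2
      = ∑ j : Fin (p + 1), (min k (n - j.val * k)).choose 2 := by
        exact Finset.sum_congr rfl fun j _ => by rw [hsize j]
    _ = p * k.choose 2 + q.choose 2 := by
        rw [Fin.sum_univ_castSucc]
        have hlast : (min k (n - (Fin.last p).val * k)).choose 2 = q.choose 2 := by
          congr 1
          simp only [Fin.val_last]
          omega
        have hrest : ∀ j : Fin p, (min k (n - (Fin.castSucc j).val * k)).choose 2 = k.choose 2 := by
          intro j
          congr 1
          simp only [Fin.coe_castSucc]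
          have hjp : j.val + 1 ≤ p := j.isLt
          have : (j.val + 1) * k ≤ p * k := Nat.mul_le_mul_right k hjp
          have h2 : (j.val + 1) * k = j.val * k + k := by ring
          omega
        rw [hlast]
        rw [Finset.sum_congr rfl (fun j _ => hrest j)]
        simp [Finset.sum_const, Finset.card_univ, mul_comm]
end Blocks

section Assemble

variable {n k : ℕ}

lemma ncard_edgeSet (G : SimpleGraph (Fin n)) [Fintype G.edgeSet] :
    G.edgeSet.ncard = #G.edgeFinset := by
  rw [← coe_edgeFinset, Set.ncard_coe_finset]

lemma bot_failure (hk : 1 ≤ k) : failureState (⊥ : SimpleGraph (Fin n)) k := by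
  intro v
  have h : ((⊥ : SimpleGraph (Fin n)).connectedComponentMk v).supp = {v} := by
    ext u
    simp only [ConnectedComponent.mem_supp_iff, ConnectedComponent.eq, reachable_bot,
      Set.mem_singleton_iff]
  rw [h, Set.ncard_singleton]
  exact hk

lemma COe_set_nonempty (hk : 1 ≤ k) (G : SimpleGraph (Fin n)) :
    {c | ∃ E' : Set (Sym2 (Fin n)), E' ⊆ G.edgeSet ∧ E'.ncard = c ∧
      failureState (G.deleteEdges E') k}.Nonempty := by
  refine ⟨G.edgeSet.ncard, G.edgeSet, subset_rfl, rfl, ?_⟩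
  have h : G.deleteEdges G.edgeSet = (⊥ : SimpleGraph (Fin n)) := by
    rw [← edgeSet_inj, edgeSet_deleteEdges]
    simp
  rw [h]
  exact bot_failure hk

lemma COe_elem_ge (hk : 1 ≤ k) (G : SimpleGraph (Fin n)) {c : ℕ}
    (hc : c ∈ {c | ∃ E' : Set (Sym2 (Fin n)), E' ⊆ G.edgeSet ∧ E'.ncard = c ∧
      failureState (G.deleteEdges E') k}) :
    G.edgeSet.ncard - Mfun k n ≤ c := by
  classical
  obtain ⟨E', hsub, hcard, hfail⟩ := hc
  have h1 : (G.deleteEdges E').edgeSet.ncard ≤ Mfun k n := by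
    rw [ncard_edgeSet]
    exact edge_le_Mfun hk _ hfail
  rw [edgeSet_deleteEdges, Set.ncard_diff hsub (Set.toFinite _)] at h1
  omega

lemma COe_ge (hk : 1 ≤ k) (G : SimpleGraph (Fin n)) :
    G.edgeSet.ncard - Mfun k n ≤ COe G k := by
  have hne := COe_set_nonempty hk G
  exact COe_elem_ge hk G (Nat.sInf_mem hne)

lemma COe_le (G : SimpleGraph (Fin n)) (E' : Set (Sym2 (Fin n))) (h1 : E' ⊆ G.edgeSet)
    (h2 : failureState (G.deleteEdges E') k) : COe G k ≤ E'.ncard :=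
  Nat.sInf_le ⟨E', h1, rfl, h2⟩

lemma COe_eq_zero (G : SimpleGraph (Fin n)) (h : failureState G k) : COe G k = 0 := by
  have h0 : (0 : ℕ) ∈ {c | ∃ E' : Set (Sym2 (Fin n)), E' ⊆ G.edgeSet ∧ E'.ncard = c ∧
      failureState (G.deleteEdges E') k} := by
    refine ⟨∅, Set.empty_subset _, Set.ncard_empty _, ?_⟩
    rw [deleteEdges_empty]
    exact h
  exact Nat.sInf_eq_zero.2 (Or.inl h0)

end Assemble


set_option maxHeartbeats 1000000 in
theorem gminE_formula (n p q : ℕ) (r : ℝ) (hr0 : 0 < r) (hr1 : r < 1)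
    (k : ℕ) (hk : k = ⌊r * n⌋₊) (hk1 : 1 ≤ k) (hn : n = p * k + q) (hq : q < k) :
    ∀ m ≤ n.choose 2,
      (m ≤ p * k.choose 2 + q.choose 2 → gminE n k m = 0) ∧
      (p * k.choose 2 + q.choose 2 < m →
        gminE n k m = m - (p * k.choose 2 + q.choose 2)) := by
  classical
  intro m hm
  have hk0 : 0 < k := hk1
  have hMfun : Mfun k n = p * k.choose 2 + q.choose 2 := by
    rw [show n = k * p + q by have := Nat.mul_comm p k; omega]
    exact Mfun_eq hk0 p hq
  have hG0card : #(blockG n k).edgeFinset = p * k.choose 2 + q.choose 2 :=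
    blockG_card p q hk0 hn hq
  constructor
  · -- small m : failure state graph with m edges
    intro hmM
    obtain ⟨T, hTsub, hTcard⟩ := Finset.exists_subset_card_eq
      (show m ≤ #(blockG n k).edgeFinset by rw [hG0card]; exact hmM)
    set G := fromEdgeSet (↑T : Set (Sym2 (Fin n))) with hGdef
    have hGedge : G.edgeSet = ↑T := by
      rw [hGdef, edgeSet_fromEdgeSet]
      ext e
      simp only [Set.mem_diff, Finset.mem_coe, Set.mem_setOf_eq, and_iff_left_iff_imp]
      intro he
      exact not_isDiag_of_mem_edgeFinset (hTsub he)
    have hGm : G.edgeSet.ncard = m := by rw [hGedge, Set.ncard_coe_finset, hTcard]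
    have hle : G ≤ blockG n k := by
      rw [← edgeSet_subset_edgeSet, hGedge, ← coe_edgeFinset]
      exact Finset.coe_subset.2 hTsub
    have hfailG : failureState G k := failureState_mono hle (blockG_failure hk0)
    exact Nat.sInf_eq_zero.2 (Or.inl ⟨G, hGm, COe_eq_zero G hfailG⟩)
  · -- large m
    intro hMm
    have htop : #(⊤ : SimpleGraph (Fin n)).edgeFinset = n.choose 2 := by
      rw [card_edgeFinset_top_eq_card_choose_two, Fintype.card_fin]
    have hsub0 : (blockG n k).edgeFinset ⊆ (⊤ : SimpleGraph (Fin n)).edgeFinset :=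
      edgeFinset_mono le_top
    have avail : m - (p * k.choose 2 + q.choose 2)
        ≤ #((⊤ : SimpleGraph (Fin n)).edgeFinset \ (blockG n k).edgeFinset) := by
      rw [Finset.card_sdiff_of_subset hsub0, htop, hG0card]
      exact Nat.sub_le_sub_right hm _
    obtain ⟨T, hTsub, hTcard⟩ := Finset.exists_subset_card_eq avail
    have hT1 : T ⊆ (⊤ : SimpleGraph (Fin n)).edgeFinset :=
      hTsub.trans (Finset.sdiff_subset)
    have hT2 : ∀ e ∈ T, e ∉ (blockG n k).edgeFinset := by
      intro e he
      exact (Finset.mem_sdiff.1 (hTsub he)).2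
    set U := (blockG n k).edgeFinset ∪ T with hUdef
    set G := fromEdgeSet (↑U : Set (Sym2 (Fin n))) with hGdef
    have hGedge : G.edgeSet = ↑U := by
      rw [hGdef, edgeSet_fromEdgeSet]
      ext e
      simp only [Set.mem_diff, Finset.mem_coe, Set.mem_setOf_eq, and_iff_left_iff_imp]
      intro he
      rcases Finset.mem_union.1 he with h | h
      · exact not_isDiag_of_mem_edgeFinset h
      · exact not_isDiag_of_mem_edgeFinset (hT1 h)
    have hUcard : #U = m := by
      rw [hUdef, Finset.card_union_of_disjoint (Finset.disjoint_left.2 fun e he₁ he₂ => hT2 e he₂ he₁),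
        hG0card, hTcard]
      omega
    have hGm : G.edgeSet.ncard = m := by rw [hGedge, Set.ncard_coe_finset, hUcard]
    have hdel : G.deleteEdges ↑T = blockG n k := by
      rw [← edgeSet_inj, edgeSet_deleteEdges, hGedge, ← coe_edgeFinset]
      ext e
      simp only [Set.mem_diff, Finset.mem_coe, hUdef, Finset.mem_union]
      constructor
      · rintro ⟨h1 | h1, h2⟩
        · exact h1
        · exact absurd h1 h2
      · intro h
        exact ⟨Or.inl h, fun hc => hT2 e hc h⟩
    have hCOe : COe G k = m - (p * k.choose 2 + q.choose 2) := by
      apply le_antisymm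
      · have hsubT : (↑T : Set (Sym2 (Fin n))) ⊆ G.edgeSet := by
          rw [hGedge]
          exact Finset.coe_subset.2 Finset.subset_union_right
        have hfdel : failureState (G.deleteEdges ↑T) k := by
          rw [hdel]
          exact blockG_failure hk0
        have h := COe_le G (↑T) hsubT hfdel
        rwa [Set.ncard_coe_finset, hTcard] at h
      · have h := COe_ge hk1 G
        rwa [hGm, hMfun] at h
    have hne : {c | ∃ G : SimpleGraph (Fin n), G.edgeSet.ncard = m ∧ COe G k = c}.Nonempty :=
      ⟨m - (p * k.choose 2 + q.choose 2), G, hGm, hCOe⟩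
    apply le_antisymm
    · exact Nat.sInf_le ⟨G, hGm, hCOe⟩
    · have hmem : ∃ G' : SimpleGraph (Fin n), G'.edgeSet.ncard = m ∧ COe G' k = gminE n k m :=
        Nat.sInf_mem hne
      obtain ⟨G', hG'm, hG'c⟩ := hmem
      rw [← hG'c]
      have h := COe_ge hk1 G'
      rwa [hG'm, hMfun] at h
end
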